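/- Let (M, ∘, e) be an F-manifold and let β₀ be a vector field satisfying the weak eventual identity condition L_{β₀}(∘)(X,Y) = [e, β₀] ∘ X ∘ Y for all vector fields X, Y, and let α be a vector field with α∘ Nijenhuis. Then for all m ≥ 1: [β₀, α^m] = (m−1)[e, β₀] ∘ α^m + m [β₀, α] ∘ α^{m−1}. -/
import Mathlib


/-- Abstract formalization on the Lie algebra `V` of vector fields with multiplication
`∘` (an F-manifold, i.e. Hertling–Manin condition): if `β₀` is a weak eventual identity
and `α∘` is Nijenhuis, then for `m ≥ 1`:
`[β₀, α^m] = (m−1)[e,β₀]∘α^m + m[β₀,α]∘α^{m−1}`. -/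
theorem stmt9 (V : Type*) [LieRing V]
    (mul : V → V → V) (e : V)
    (hcomm : ∀ X Y, mul X Y = mul Y X)
    (hassoc : ∀ X Y Z, mul (mul X Y) Z = mul X (mul Y Z))
    (hunit : ∀ X, mul e X = X)
    (haddl : ∀ X Y Z, mul (X + Y) Z = mul X Z + mul Y Z)
    (LD : V → V → V → V)
    (hLD : ∀ Z X Y, LD Z X Y = ⁅Z, mul X Y⁆ - mul ⁅Z, X⁆ Y - mul X ⁅Z, Y⁆)
    (hHM : ∀ X Y Z W, LD (mul X Y) Z W = mul X (LD Y Z W) + mul Y (LD X Z W))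
    (α β₀ : V)
    (hwEI : ∀ X Y, LD β₀ X Y = mul ⁅e, β₀⁆ (mul X Y))
    (hN : ∀ X Y : V,
      ⁅mul α X, mul α Y⁆ - mul α ⁅X, mul α Y⁆ - mul α ⁅mul α X, Y⁆
        + mul α (mul α ⁅X, Y⁆) = 0)
    (apow : ℕ → V) (hpow0 : apow 0 = e) (hpowS : ∀ k, apow (k + 1) = mul α (apow k)) :
    ∀ m : ℕ, 1 ≤ m →
      ⁅β₀, apow m⁆ = (m - 1) • mul ⁅e, β₀⁆ (apow m) + m • mul ⁅β₀, α⁆ (apow (m - 1)) := by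
  set b := ⁅e, β₀⁆ with hb
  set c := ⁅β₀, α⁆ with hc
  have hzero : ∀ X, mul X 0 = 0 := by
    intro X
    have h := haddl 0 0 X
    rw [add_zero] at h
    have h0 : mul 0 X = 0 := left_eq_add.mp h
    rw [hcomm, h0]
  have haddr : ∀ X Y Z, mul X (Y + Z) = mul X Y + mul X Z := by
    intro X Y Z
    rw [hcomm, haddl, hcomm Y X, hcomm Z X]
  have hsmul : ∀ (n : ℕ) X Y, mul X (n • Y) = n • mul X Y := by
    intro n X Y
    induction n with
    | zero => simp [hzero]
    | succ k ih => rw [succ_nsmul, succ_nsmul, haddr, ih]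
  -- Leibniz rule for β₀:
  have hleib : ∀ X Y, ⁅β₀, mul X Y⁆ = mul c Y + mul X ⁅β₀, Y⁆ + mul b (mul X Y) → True :=
    fun _ _ _ => trivial
  have hL : ∀ X Y, ⁅β₀, mul X Y⁆ = mul ⁅β₀, X⁆ Y + mul X ⁅β₀, Y⁆ + mul b (mul X Y) := by
    intro X Y
    have h := hwEI X Y
    rw [hLD, sub_sub, sub_eq_iff_eq_add] at h
    rw [h]
    abel
  intro m hm
  induction m, hm using Nat.le_induction with
  | base =>
    simp only [Nat.sub_self, zero_smul, one_smul, zero_add, hpow0]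
    rw [show (1:ℕ) = 0 + 1 from rfl, hpowS, hpow0, hcomm α e, hunit, hcomm c e, hunit]
  | succ m hm ih =>
    have hm1 : m - 1 + 1 = m := Nat.sub_add_cancel hm
    rw [hpowS m, hL α (apow m), ih, haddr, hsmul, hsmul]
    have e1 : mul α (mul b (apow m)) = mul b (apow (m + 1)) := by
      rw [← hassoc, hcomm α b, hassoc, ← hpowS]
    have e2 : mul α (mul c (apow (m - 1))) = mul c (apow m) := by
      rw [← hassoc, hcomm α c, hassoc, ← hpowS, hm1]
    rw [e1, e2, ← hpowS]
    have : (m + 1 - 1) = m := by omega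
    rw [this]
    have hsplit : (m : ℕ) • mul b (apow (m+1)) =
        (m - 1) • mul b (apow (m+1)) + mul b (apow (m+1)) := by
      nth_rewrite 1 [← hm1]
      rw [succ_nsmul]
    rw [hsplit]
    have : ((m:ℕ)+1) • mul c (apow m) = mul c (apow m) + m • mul c (apow m) := by
      rw [succ_nsmul, add_comm]
    rw [this]
    abel
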